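/- Let G = (N, Δ, π) be an infinite bottleneck congestion game in which every cost function c_f is strictly increasing. Then G has the LIP for the function ν : Δ → ℝ≥0^m defined by ν_f(ξ) = c_f(ℓ_f(ξ)) for all f ∈ F: for every improving move (ξ, (ν_S, ξ_{−S})) of any nonempty coalition S ⊆ N, the vector (c_f(ℓ_f(ν_S, ξ_{−S})))_{f∈F} is strictly sorted-lexicographically smaller than (c_f(ℓ_f(ξ)))_{f∈F}. -/

import Mathlib

open Finset

/-- The vector `a` sorted in non-increasing order. -/
noncomputable def sortDesc {α : Type*} [LinearOrder α] {q : ℕ} (a : Fin q → α) : Fin q → α :=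
  fun i => a (Tuple.sort a i.rev)

/-- `a` is strictly sorted-lexicographically smaller than `b`. -/
def SLexLt {α : Type*} [LinearOrder α] {q : ℕ} (a b : Fin q → α) : Prop :=
  ∃ m : Fin q, (∀ i, i < m → sortDesc a i = sortDesc b i) ∧ sortDesc a m < sortDesc b m

/-- Sorted-lexicographic comparison of vectors indexed by an arbitrary finite type. -/
def SLexLtOn {α : Type*} [LinearOrder α] {ι : Type*} [Fintype ι] (a b : ι → α) : Prop :=
  SLexLt (a ∘ (Fintype.equivFin ι).symm) (b ∘ (Fintype.equivFin ι).symm)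

/-- An improving move: some nonempty coalition `S` deviates (players outside `S`
keep their strategies) and every member of `S` strictly decreases her cost. -/
def ImprovingMove {ι : Type*} {X : ι → Type*} {β : Type*} [Preorder β]
    (π : (∀ i, X i) → ι → β) (x y : ∀ i, X i) : Prop :=
  ∃ S : Finset ι, S.Nonempty ∧ (∀ i ∉ S, y i = x i) ∧ ∀ i ∈ S, π y i < π x i

open scoped NNReal

/-- The load of facility `f` under a splittable strategy profile `ξ`:
the sum of all intensities put on pure strategies containing `f`. -/
noncomputable def facLoad {ι F : Type*} [Fintype ι] [Fintype F] [DecidableEq F] {ni : ι → ℕ}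
    (strat : ∀ i, Fin (ni i) → Finset F) (ξ : ∀ i, Fin (ni i) → ℝ≥0) (f : F) : ℝ≥0 :=
  ∑ i, ∑ j ∈ Finset.univ.filter (fun j => f ∈ strat i j), ξ i j

/-- The set `F_i(ξ)` of facilities used by player `i` under profile `ξ`. -/
noncomputable def usedFac {ι F : Type*} [Fintype F] [DecidableEq F] {ni : ι → ℕ}
    (strat : ∀ i, Fin (ni i) → Finset F) (ξ : ∀ i, Fin (ni i) → ℝ≥0) (i : ι) : Finset F :=
  Finset.univ.filter (fun f => ∃ j, f ∈ strat i j ∧ 0 < ξ i j)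

/-- The private (bottleneck) cost `π_i(ξ) = max_{f ∈ F_i(ξ)} c_f(ℓ_f(ξ))` of
player `i` in an infinite bottleneck congestion game. -/
noncomputable def btlCost {ι F : Type*} [Fintype ι] [Fintype F] [DecidableEq F] {ni : ι → ℕ}
    (c : F → ℝ≥0 → ℝ≥0) (strat : ∀ i, Fin (ni i) → Finset F)
    (ξ : ∀ i, Fin (ni i) → ℝ≥0) (i : ι) : ℝ≥0 :=
  (usedFac strat ξ i).sup (fun f => c f (facLoad strat ξ f))

section SLexAux

variable {α : Type*} [LinearOrder α]

lemma card_filter_comp_equiv {κ ι : Type*} [Fintype ι] [Fintype κ]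
    (e : κ ≃ ι) (a : ι → α) (p : α → Prop) [DecidablePred p] :
    (univ.filter fun i => p (a (e i))).card = (univ.filter fun i => p (a i)).card := by
  apply Finset.card_bij (fun i _ => e i)
  · intro i hi; simp only [mem_filter, mem_univ, true_and] at hi ⊢; exact hi
  · intro i _ j _ h; exact e.injective h
  · intro j hj
    simp only [mem_filter, mem_univ, true_and] at hj ⊢
    exact ⟨e.symm j, by simpa using hj, by simp⟩

lemma sortDesc_antitone {q : ℕ} (a : Fin q → α) : Antitone (sortDesc a) := by
  intro i j hij
  exact Tuple.monotone_sort a (Fin.rev_le_rev.mpr hij)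

lemma card_filter_sortDesc {q : ℕ} (a : Fin q → α) (p : α → Prop) [DecidablePred p] :
    (univ.filter fun i => p (sortDesc a i)).card = (univ.filter fun i => p (a i)).card := by
  have : ∀ i, sortDesc a i = a ((Fin.revPerm.trans (Tuple.sort a)) i) := fun i => rfl
  simp only [this]
  exact card_filter_comp_equiv _ a p

lemma antitone_mem_count_iff {q : ℕ} {A : Fin q → α} (hA : Antitone A) (t : α) (i : Fin q) :
    t ≤ A i ↔ i.val < (univ.filter fun j => t ≤ A j).card := by
  constructor
  · intro h
    have hsub : Finset.Iic i ⊆ univ.filter fun j => t ≤ A j := by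
      intro j hj
      simp only [mem_Iic] at hj
      exact mem_filter.mpr ⟨mem_univ _, h.trans (hA hj)⟩
    have := Finset.card_le_card hsub
    rw [Fin.card_Iic] at this
    omega
  · intro h
    by_contra hc
    have hsub : (univ.filter fun j => t ≤ A j) ⊆ Finset.Iio i := by
      intro j hj
      simp only [mem_filter] at hj
      simp only [mem_Iio]
      by_contra hj'
      exact hc (hj.2.trans (hA (not_lt.mp hj')))
    have := Finset.card_le_card hsub
    rw [Fin.card_Iio] at this
    omega

lemma slexLt_of_counts {q : ℕ} (a b : Fin q → α) (L : α)
    (h1 : ∀ t, L ≤ t →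
      (univ.filter fun i => t ≤ a i).card ≤ (univ.filter fun i => t ≤ b i).card)
    (h2 : (univ.filter fun i => L ≤ a i).card < (univ.filter fun i => L ≤ b i).card) :
    SLexLt a b := by
  set A := sortDesc a with hA
  set B := sortDesc b with hB
  have hAm : Antitone A := sortDesc_antitone a
  have hBm : Antitone B := sortDesc_antitone b
  have cA : ∀ t, (univ.filter fun i => t ≤ A i).card = (univ.filter fun i => t ≤ a i).card :=
    fun t => card_filter_sortDesc a (t ≤ ·)
  have cB : ∀ t, (univ.filter fun i => t ≤ B i).card = (univ.filter fun i => t ≤ b i).card :=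
    fun t => card_filter_sortDesc b (t ≤ ·)
  have h1' : ∀ t, L ≤ t →
      (univ.filter fun i => t ≤ A i).card ≤ (univ.filter fun i => t ≤ B i).card := by
    intro t ht; rw [cA, cB]; exact h1 t ht
  have h2' : (univ.filter fun i => L ≤ A i).card < (univ.filter fun i => L ≤ B i).card := by
    rw [cA, cB]; exact h2
  set k := (univ.filter fun i => L ≤ A i).card with hk
  have hkq : k < q := by
    have : (univ.filter fun i => L ≤ B i).card ≤ q := by
      simpa using Finset.card_filter_le univ fun i => L ≤ B i
    omega
  set K : Fin q := ⟨k, hkq⟩ with hK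
  have hAK : A K < L := by
    by_contra h
    have := (antitone_mem_count_iff hAm L K).mp (not_lt.mp h)
    simp only [hK] at this
    omega
  have hBK : L ≤ B K := by
    rw [antitone_mem_count_iff hBm L K]
    exact h2'
  have hne : A K ≠ B K := fun h => absurd (h ▸ hBK) (not_le.mpr hAK)
  set D := univ.filter (fun i => A i ≠ B i) with hD
  have hDne : D.Nonempty := ⟨K, mem_filter.mpr ⟨mem_univ _, hne⟩⟩
  set m := D.min' hDne with hm
  have hmD : m ∈ D := Finset.min'_mem D hDne
  have hmne : A m ≠ B m := (mem_filter.mp hmD).2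
  have heq : ∀ i, i < m → A i = B i := by
    intro i hi
    by_contra h
    exact absurd (Finset.min'_le D i (mem_filter.mpr ⟨mem_univ _, h⟩)) (not_le.mpr hi)
  have hmK : m ≤ K := Finset.min'_le D K (mem_filter.mpr ⟨mem_univ _, hne⟩)
  refine ⟨m, heq, ?_⟩
  rcases lt_or_gt_of_ne hmne with h | h
  · exact h
  · exfalso
    rcases eq_or_lt_of_le hmK with hmk | hmk
    · rw [hmk] at h
      exact absurd (hAK.trans_le hBK) (not_lt.mpr h.le)
    · have hmklt : m.val < k := hmk
      have hLAm : L ≤ A m := (antitone_mem_count_iff hAm L m).mpr hmklt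
      set t := A m with ht
      have hNA : m.val < (univ.filter fun i => t ≤ A i).card :=
        (antitone_mem_count_iff hAm t m).mp le_rfl
      have hNB : (univ.filter fun i => t ≤ B i).card ≤ m.val := by
        have hsub : (univ.filter fun i => t ≤ B i) ⊆ Finset.Iio m := by
          intro i hi
          simp only [mem_filter] at hi
          simp only [mem_Iio]
          by_contra hi'
          exact absurd (hi.2.trans (hBm (not_lt.mp hi'))) (not_le.mpr h)
        simpa [Fin.card_Iio] using Finset.card_le_card hsub
      have := h1' t hLAm
      omega

lemma slexLtOn_of_counts {ι : Type*} [Fintype ι] (a b : ι → α) (L : α)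
    (h1 : ∀ t, L ≤ t →
      (univ.filter fun f => t ≤ a f).card ≤ (univ.filter fun f => t ≤ b f).card)
    (h2 : (univ.filter fun f => L ≤ a f).card < (univ.filter fun f => L ≤ b f).card) :
    SLexLtOn a b := by
  apply slexLt_of_counts _ _ L
  · intro t ht
    have ea := card_filter_comp_equiv (Fintype.equivFin ι).symm a (t ≤ ·)
    have eb := card_filter_comp_equiv (Fintype.equivFin ι).symm b (t ≤ ·)
    exact ea.trans_le ((h1 t ht).trans_eq eb.symm)
  · have ea := card_filter_comp_equiv (Fintype.equivFin ι).symm a (L ≤ ·)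
    have eb := card_filter_comp_equiv (Fintype.equivFin ι).symm b (L ≤ ·)
    exact ea.trans_lt (h2.trans_eq eb.symm)

end SLexAux

/-- An infinite bottleneck congestion game with strictly
increasing facility cost functions has the LIP for the function
`ν_f(ξ) = c_f(ℓ_f(ξ))`. -/
theorem stmt_16 {ι F : Type*} [Fintype ι] [Nonempty ι] [Fintype F] [Nonempty F]
    [DecidableEq F] {ni : ι → ℕ} (hni : ∀ i, 0 < ni i)
    (strat : ∀ i, Fin (ni i) → Finset F) (hstrat : ∀ i j, (strat i j).Nonempty)
    (d : ι → ℝ≥0) (hd : ∀ i, 0 < d i)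
    (c : F → ℝ≥0 → ℝ≥0) (hc : ∀ f, StrictMono (c f)) :
    ∀ ξ ν : ∀ i, Fin (ni i) → ℝ≥0,
      (∀ i, ∑ j, ξ i j = d i) → (∀ i, ∑ j, ν i j = d i) →
      ImprovingMove (btlCost c strat) ξ ν →
      SLexLtOn (fun f => c f (facLoad strat ν f)) (fun f => c f (facLoad strat ξ f)) := by
  intro ξ ν hξd hνd hmove
  classical
  obtain ⟨S, hSne, hkeep, himp⟩ := hmove
  set a : F → ℝ≥0 := fun f => c f (facLoad strat ν f) with ha
  set b : F → ℝ≥0 := fun f => c f (facLoad strat ξ f) with hb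
  set L : ℝ≥0 := S.sup' hSne (btlCost c strat ξ) with hL
  -- contribution of player i to facility f under profile ζ
  set P : (∀ i, Fin (ni i) → ℝ≥0) → ι → F → ℝ≥0 :=
    fun ζ i f => ∑ j ∈ Finset.univ.filter (fun j => f ∈ strat i j), ζ i j with hP
  have hload : ∀ ζ f, facLoad strat ζ f = ∑ i, P ζ i f := fun _ _ => rfl
  have husedP : ∀ ζ i f, f ∈ usedFac strat ζ i ↔ 0 < P ζ i f := by
    intro ζ i f
    simp only [usedFac, mem_filter, mem_univ, true_and, hP]
    rw [pos_iff_ne_zero, Ne, Finset.sum_eq_zero_iff]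
    simp only [mem_filter, mem_univ, true_and]
    constructor
    · rintro ⟨j, hj1, hj2⟩ h
      exact absurd (h j hj1) (pos_iff_ne_zero.mp hj2)
    · intro h
      push_neg at h
      obtain ⟨j, hj1, hj2⟩ := h
      exact ⟨j, hj1, pos_iff_ne_zero.mpr hj2⟩
  -- key: if some player's contribution to f strictly increases, then a f < L
  have key : ∀ f i, P ξ i f < P ν i f → a f < L := by
    intro f i hPi
    have hiS : i ∈ S := by
      by_contra h
      have : P ν i f = P ξ i f := by simp only [hP, hkeep i h]
      rw [this] at hPi
      exact lt_irrefl _ hPi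
    have hfused : f ∈ usedFac strat ν i :=
      (husedP ν i f).mpr (lt_of_le_of_lt zero_le hPi)
    have h1 : a f ≤ btlCost c strat ν i := Finset.le_sup hfused
    have h2 : btlCost c strat ν i < btlCost c strat ξ i := himp i hiS
    have h3 : btlCost c strat ξ i ≤ L := Finset.le_sup' _ hiS
    exact lt_of_le_of_lt h1 (lt_of_lt_of_le h2 h3)
  -- Fact A
  have factA : ∀ f, b f < a f → a f < L := by
    intro f hf
    have hlt : facLoad strat ξ f < facLoad strat ν f := by
      by_contra h
      push_neg at h
      exact absurd ((hc f).monotone h) (not_le.mpr hf)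
    rw [hload, hload] at hlt
    obtain ⟨i, -, hi⟩ := Finset.exists_lt_of_sum_lt hlt
    exact key f i hi
  -- Fact B : a witness g with b g = L and a g < L
  obtain ⟨i0, hi0S, hi0L⟩ := Finset.exists_mem_eq_sup' hSne (btlCost c strat ξ)
  have hused_ne : (usedFac strat ξ i0).Nonempty := by
    obtain ⟨j, hj⟩ : ∃ j, 0 < ξ i0 j := by
      by_contra h
      push_neg at h
      have : ∑ j, ξ i0 j = 0 := Finset.sum_eq_zero (fun j _ => le_antisymm (h j) zero_le)
      rw [hξd i0] at this
      exact absurd this (pos_iff_ne_zero.mp (hd i0))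
    obtain ⟨f, hf⟩ := hstrat i0 j
    exact ⟨f, mem_filter.mpr ⟨mem_univ _, j, hf, hj⟩⟩
  obtain ⟨g, hg_used, hgval⟩ := Finset.exists_mem_eq_sup (usedFac strat ξ i0) hused_ne
    (fun f => c f (facLoad strat ξ f))
  have hbg : b g = L := by
    have h1 : L = btlCost c strat ξ i0 := hi0L
    have h2 : btlCost c strat ξ i0 = b g := hgval
    exact (h1.trans h2).symm
  have hag : a g < L := by
    rcases lt_trichotomy (a g) L with h | h | h
    · exact h
    · exfalso
      have hload_eq : facLoad strat ν g = facLoad strat ξ g :=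
        (hc g).injective (by rw [← ha, ← hb] at *; rw [show c g (facLoad strat ν g) = a g from rfl, show c g (facLoad strat ξ g) = b g from rfl, h, hbg])
      have hnot : g ∉ usedFac strat ν i0 := by
        intro hmem
        have h1 : a g ≤ btlCost c strat ν i0 := Finset.le_sup hmem
        have h2 : btlCost c strat ν i0 < btlCost c strat ξ i0 := himp i0 hi0S
        rw [← hi0L] at h2
        exact absurd (lt_of_le_of_lt h1 h2) (not_lt.mpr h.ge)
      have hP0 : P ν i0 g = 0 := by
        rw [husedP] at hnot
        simpa using hnot
      have hPpos : 0 < P ξ i0 g := (husedP ξ i0 g).mp hg_used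
      have hsum : ∑ i, P ξ i g = ∑ i, P ν i g := by
        rw [← hload, ← hload, hload_eq]
      have hi0lt : P ν i0 g < P ξ i0 g := hP0 ▸ hPpos
      have hrest : ∑ i ∈ univ.erase i0, P ξ i g < ∑ i ∈ univ.erase i0, P ν i g := by
        have e1 : P ξ i0 g + ∑ i ∈ univ.erase i0, P ξ i g = ∑ i, P ξ i g :=
          Finset.add_sum_erase univ (fun i => P ξ i g) (mem_univ i0)
          
        have e2 : P ν i0 g + ∑ i ∈ univ.erase i0, P ν i g = ∑ i, P ν i g :=
          Finset.add_sum_erase univ (fun i => P ν i g) (mem_univ i0)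
          
        have : P ξ i0 g + ∑ i ∈ univ.erase i0, P ξ i g
            = P ν i0 g + ∑ i ∈ univ.erase i0, P ν i g := by rw [e1, e2, hsum]
        exact lt_of_add_lt_add_left (this ▸ add_lt_add_left hi0lt _)
      obtain ⟨i1, -, hi1⟩ := Finset.exists_lt_of_sum_lt hrest
      exact absurd (key g i1 hi1) (not_lt.mpr h.ge)
    · exact absurd (factA g (hbg ▸ h)) (not_lt.mpr h.le)
  -- counting hypotheses
  have hsub : ∀ t : ℝ≥0, L ≤ t →
      (univ.filter fun f => t ≤ a f) ⊆ (univ.filter fun f => t ≤ b f) := by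
    intro t ht f hf
    rw [mem_filter] at hf ⊢
    refine ⟨mem_univ _, ?_⟩
    by_contra h
    push_neg at h
    have hba : b f < a f := lt_of_lt_of_le h hf.2
    exact absurd hf.2 (not_le.mpr (lt_of_lt_of_le (factA f hba) ht))
  apply slexLtOn_of_counts a b L
  · intro t ht
    exact Finset.card_le_card (hsub t ht)
  · apply Finset.card_lt_card
    rw [Finset.ssubset_iff_of_subset (hsub L le_rfl)]
    exact ⟨g, mem_filter.mpr ⟨mem_univ _, hbg.ge⟩, fun hcon =>
      absurd (mem_filter.mp hcon).2 (not_le.mpr hag)⟩
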